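/- Let k be a field, n ≥ 2, F the free group on generators t_1, …, t_n, Λ = MonoidAlgebra k F, ε : Λ → k the augmentation, ℓ the length function, and D_i, D̄_i the canonical Fox derivatives. Let γ ∈ Λ be comonic (ε(γ) = 1), let Λγ = Submodule.span Λ {γ}, and define the operators S_i, S̄_i : Λ → Λ by S_i(λ) = D_i(λ − ε(λ)·γ) and S̄_i(λ) = D̄_i(λ − ε(λ)·γ). Then for every λ ∈ Λ with λ ∉ Λγ, there exists a nonempty finite composition f of operators from {S_1, …, S_n, S̄_1, …, S̄_n} such that f(λ) ∉ Λγ and ℓ(f(λ)) ≤ ℓ(γ). -/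

import Mathlib

/-- The augmentation map of the group algebra of the free group of rank `n`:
the `k`-algebra homomorphism sending every group element to `1`. -/
noncomputable def freeGroupAug (k : Type*) [CommRing k] (n : ℕ) :
    MonoidAlgebra k (FreeGroup (Fin n)) →ₐ[k] k :=
  MonoidAlgebra.lift k k (FreeGroup (Fin n)) 1

/-- The length of a free polynomial: the maximal reduced-word length over its support
(with `0` for the zero polynomial). -/
noncomputable def flen {k : Type*} [CommRing k] {n : ℕ}
    (γ : MonoidAlgebra k (FreeGroup (Fin n))) : ℕ :=
  γ.coeff.support.sup fun w => (FreeGroup.toWord w).length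



noncomputable section
namespace Stmt16Aux

variable (k : Type*) [Field k] (n : ℕ)

abbrev F := FreeGroup (Fin n)
abbrev Lam := MonoidAlgebra k (FreeGroup (Fin n))

/-- Semidirect product `F ⋉ Λ` used to build Fox-derivative cocycles. -/
@[ext] structure SD where
  g : FreeGroup (Fin n)
  a : MonoidAlgebra k (FreeGroup (Fin n))

namespace SD

variable {k n}

instance : Group (SD k n) where
  mul x y := ⟨x.g * y.g, x.a * MonoidAlgebra.of k (F n) y.g + y.a⟩
  one := ⟨1, 0⟩
  inv x := ⟨x.g⁻¹, -x.a * MonoidAlgebra.of k (F n) x.g⁻¹⟩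
  mul_assoc x y z := by
    refine SD.ext (mul_assoc _ _ _) ?_
    show (x.a * _ + y.a) * _ + z.a
        = x.a * MonoidAlgebra.of k (F n) (y.g * z.g) + (y.a * _ + z.a)
    rw [map_mul]
    noncomm_ring
  one_mul x := by
    refine SD.ext (one_mul _) ?_
    show 0 * _ + x.a = x.a
    noncomm_ring
  mul_one x := by
    refine SD.ext (mul_one _) ?_
    show x.a * MonoidAlgebra.of k (F n) (1 : F n) + 0 = x.a
    rw [map_one]
    noncomm_ring
  inv_mul_cancel x := by
    refine SD.ext (inv_mul_cancel _) ?_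
    show (-x.a * MonoidAlgebra.of k (F n) x.g⁻¹) * MonoidAlgebra.of k (F n) x.g + x.a = 0
    rw [mul_assoc, ← map_mul, inv_mul_cancel, map_one, mul_one, neg_add_cancel]

@[simp] lemma mul_g (x y : SD k n) : (x * y).g = x.g * y.g := rfl
@[simp] lemma mul_a (x y : SD k n) : (x * y).a = x.a * MonoidAlgebra.of k (F n) y.g + y.a := rfl
@[simp] lemma one_g : (1 : SD k n).g = 1 := rfl
@[simp] lemma one_a : (1 : SD k n).a = 0 := rfl
@[simp] lemma inv_g (x : SD k n) : x⁻¹.g = x.g⁻¹ := rfl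
@[simp] lemma inv_a (x : SD k n) : x⁻¹.a = -x.a * MonoidAlgebra.of k (F n) x.g⁻¹ := rfl

end SD

variable {k n}

/-- generator images for the cocycle `d_{b,i}`. -/
def vgen (b : Bool) (i j : Fin n) : Lam k n :=
  if j = i then (cond b 1 (-(MonoidAlgebra.of k (F n) (FreeGroup.of i)))) else 0

/-- the cocycle as a group hom into the semidirect product. -/
def dmap (b : Bool) (i : Fin n) : F n →* SD k n :=
  FreeGroup.lift (fun j => ⟨FreeGroup.of j, vgen b i j⟩)

/-- first projection of `dmap` is the identity -/
lemma dmap_g (b : Bool) (i : Fin n) (w : F n) : ((dmap (k := k) b i) w).g = w := by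
  have h : ∀ w : F n, ((dmap (k := k) b i) w).g = FreeGroup.lift FreeGroup.of w := by
    intro w
    induction w using FreeGroup.induction_on with
    | C1 => simp [dmap]
    | of x =>
      rw [FreeGroup.lift_apply_of]
      show ((FreeGroup.lift fun j => (⟨FreeGroup.of j, vgen b i j⟩ : SD k n)) (FreeGroup.of x)).g
        = FreeGroup.of x
      rw [FreeGroup.lift_apply_of]
    | inv_of x ih => simp only [map_inv, SD.inv_g, ih]
    | mul x y hx hy => simp only [map_mul, SD.mul_g, hx, hy]
  rw [h, FreeGroup.lift_of_apply]

/-- The Fox-derivative cocycle on group elements. -/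
def dfun (b : Bool) (i : Fin n) (w : F n) : Lam k n := ((dmap (k := k) b i) w).a

lemma dfun_one (b : Bool) (i : Fin n) : dfun (k := k) b i (1 : F n) = 0 := by
  simp [dfun]

lemma dfun_of (b : Bool) (i : Fin n) (j : Fin n) :
    dfun (k := k) b i (FreeGroup.of j) = vgen b i j := by
  show ((FreeGroup.lift fun j => (⟨FreeGroup.of j, vgen b i j⟩ : SD k n)) (FreeGroup.of j)).a
    = vgen b i j
  rw [FreeGroup.lift_apply_of]

lemma dfun_mul (b : Bool) (i : Fin n) (u v : F n) :
    dfun (k := k) b i (u * v) = dfun b i u * MonoidAlgebra.of k (F n) v + dfun b i v := by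
  simp [dfun, map_mul, dmap_g]

lemma dfun_inv (b : Bool) (i : Fin n) (u : F n) :
    dfun (k := k) b i u⁻¹ = -dfun b i u * MonoidAlgebra.of k (F n) u⁻¹ := by
  simp only [dfun, map_inv, SD.inv_a, dmap_g]

/-- group-element generator for direction `b` -/
def gel (b : Bool) (j : Fin n) : F n := cond b (FreeGroup.of j) (FreeGroup.of j)⁻¹

@[simp] lemma gel_true (j : Fin n) : gel (n := n) true j = FreeGroup.of j := rfl
@[simp] lemma gel_false (j : Fin n) : gel (n := n) false j = (FreeGroup.of j)⁻¹ := rfl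

/-- Reconstruction identity on group elements. -/
lemma recon_word (b : Bool) (w : F n) :
    (MonoidAlgebra.of k (F n) w : Lam k n) - 1 =
      ∑ i : Fin n, (MonoidAlgebra.of k (F n) (gel b i) - 1) * dfun b i w := by
  induction w using FreeGroup.induction_on with
  | C1 => simp [dfun_one, MonoidAlgebra.one_def]
  | of x =>
    have key : ∀ i : Fin n,
        (MonoidAlgebra.of k (F n) (gel b i) - 1) * dfun (k := k) b i (FreeGroup.of x)
        = if x = i then (MonoidAlgebra.of k (F n) (FreeGroup.of x) - 1) else 0 := by
      intro i
      rw [dfun_of, vgen]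
      by_cases hxi : x = i
      · subst hxi
        rw [if_pos rfl, if_pos rfl]
        cases b with
        | true => simp
        | false =>
          show (MonoidAlgebra.of k (F n) (FreeGroup.of x)⁻¹ - 1) *
              (-(MonoidAlgebra.of k (F n) (FreeGroup.of x)))
            = MonoidAlgebra.of k (F n) (FreeGroup.of x) - 1
          have h1 : (MonoidAlgebra.of k (F n) (FreeGroup.of x)⁻¹ : Lam k n) *
              MonoidAlgebra.of k (F n) (FreeGroup.of x) = 1 := by
            rw [← map_mul, inv_mul_cancel, map_one]
          rw [sub_mul, one_mul, mul_neg, h1]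
          noncomm_ring
      · rw [if_neg hxi, if_neg hxi, mul_zero]
    simp only [key, Finset.sum_ite_eq, Finset.mem_univ, if_pos]
  | inv_of x ih =>
    have h1 : ∀ i : Fin n, (MonoidAlgebra.of k (F n) (gel b i) - 1) *
        dfun (k := k) b i (FreeGroup.of x : F n)⁻¹
        = -((MonoidAlgebra.of k (F n) (gel b i) - 1) * dfun b i (FreeGroup.of x) *
            MonoidAlgebra.of k (F n) (FreeGroup.of x : F n)⁻¹) := by
      intro i
      rw [dfun_inv]
      noncomm_ring
    simp only [h1]
    rw [Finset.sum_neg_distrib, ← Finset.sum_mul, ← ih]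
    rw [sub_mul, one_mul, ← map_mul, mul_inv_cancel, map_one]
    noncomm_ring
  | mul u v hu hv =>
    have h1 : ∀ i : Fin n, (MonoidAlgebra.of k (F n) (gel b i) - 1) * dfun (k := k) b i (u * v)
        = (MonoidAlgebra.of k (F n) (gel b i) - 1) * dfun b i u * MonoidAlgebra.of k (F n) v
          + (MonoidAlgebra.of k (F n) (gel b i) - 1) * dfun b i v := by
      intro i
      rw [dfun_mul]
      noncomm_ring
    simp only [h1]
    rw [Finset.sum_add_distrib, ← Finset.sum_mul, ← hu, ← hv, map_mul]
    noncomm_ring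


/-- Linear extension of the Fox derivative to the group algebra. -/
def Dlin (b : Bool) (i : Fin n) : Lam k n →ₗ[k] Lam k n :=
  (Finsupp.lsum k fun w => LinearMap.toSpanSingleton k (Lam k n) (dfun b i w)) ∘ₗ
    (MonoidAlgebra.coeffLinearEquiv k).toLinearMap

lemma Dlin_apply (b : Bool) (i : Fin n) (ν : Lam k n) :
    Dlin b i ν = ν.coeff.sum fun w c => c • dfun b i w := rfl

lemma Dlin_of (b : Bool) (i : Fin n) (w : F n) :
    Dlin b i (MonoidAlgebra.of k (F n) w) = dfun b i w := by
  rw [Dlin_apply]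
  exact (Finsupp.sum_single_index (zero_smul k (dfun b i w))).trans (one_smul k (dfun b i w))

lemma aug_of (w : F n) : freeGroupAug k n (MonoidAlgebra.of k (F n) w) = 1 := by
  show freeGroupAug k n (MonoidAlgebra.single w 1) = 1
  rw [freeGroupAug, MonoidAlgebra.lift_single]
  simp

lemma Dlin_of_mul (b : Bool) (i : Fin n) (g : F n) (μ : Lam k n) :
    Dlin b i (MonoidAlgebra.of k (F n) g * μ) = dfun b i g * μ + Dlin b i μ := by
  induction μ using MonoidAlgebra.induction_on with
  | of w => rw [← map_mul, Dlin_of, Dlin_of, dfun_mul]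
  | add f h hf hh => rw [mul_add, map_add, hf, hh, map_add]; noncomm_ring
  | smul r f hf =>
    rw [mul_smul_comm, map_smul, hf, map_smul, smul_add, mul_smul_comm]

lemma dfun_gel (b : Bool) (i j : Fin n) :
    dfun (k := k) b i (gel b j) = if j = i then 1 else 0 := by
  cases b with
  | true => rw [gel_true, dfun_of, vgen]; rfl
  | false =>
    rw [gel_false, dfun_inv, dfun_of, vgen]
    by_cases hji : j = i
    · subst hji
      rw [if_pos rfl, if_pos rfl]
      show -(-(MonoidAlgebra.of k (F n) (FreeGroup.of j))) * _ = 1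
      rw [neg_neg, ← map_mul, mul_inv_cancel, map_one]
    · rw [if_neg hji, if_neg hji, neg_zero, zero_mul]

lemma Dlin_gel_mul (b : Bool) (i j : Fin n) (μ : Lam k n) :
    Dlin b i ((MonoidAlgebra.of k (F n) (gel b j) - 1) * μ) = if j = i then μ else 0 := by
  have h1 : (MonoidAlgebra.of k (F n) (gel b j) - 1) * μ
      = MonoidAlgebra.of k (F n) (gel b j) * μ - μ := by noncomm_ring
  rw [h1, map_sub, Dlin_of_mul, dfun_gel]
  by_cases hji : j = i
  · rw [if_pos hji, if_pos hji, one_mul]; abel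
  · rw [if_neg hji, if_neg hji, zero_mul]; abel

/-- Reconstruction identity on the group algebra. -/
lemma recon_lam (b : Bool) (μ : Lam k n) :
    μ = freeGroupAug k n μ • (1 : Lam k n)
      + ∑ i : Fin n, (MonoidAlgebra.of k (F n) (gel b i) - 1) * Dlin b i μ := by
  induction μ using MonoidAlgebra.induction_on with
  | of w =>
    rw [aug_of, one_smul]
    simp only [Dlin_of]
    rw [← recon_word]
    noncomm_ring
  | add f h hf hh =>
    rw [map_add, add_smul]
    conv_lhs => rw [hf, hh]
    have : ∀ i : Fin n, (MonoidAlgebra.of k (F n) (gel b i) - 1) * Dlin (k := k) b i (f + h)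
        = (MonoidAlgebra.of k (F n) (gel b i) - 1) * Dlin b i f
          + (MonoidAlgebra.of k (F n) (gel b i) - 1) * Dlin b i h := by
      intro i; rw [map_add]; noncomm_ring
    simp only [this, Finset.sum_add_distrib]
    abel
  | smul r f hf =>
    rw [map_smul]
    have h1 : ∀ i : Fin n, (MonoidAlgebra.of k (F n) (gel b i) - 1) *
        Dlin (k := k) b i (r • f)
        = r • ((MonoidAlgebra.of k (F n) (gel b i) - 1) * Dlin b i f) := by
      intro i; rw [map_smul, mul_smul_comm]
    simp only [h1, ← Finset.smul_sum]
    rw [smul_eq_mul, mul_smul, ← smul_add, ← hf]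


/-! ### Length machinery -/

/-- local copy of `flen`. -/
def flen' (μ : Lam k n) : ℕ := μ.coeff.support.sup fun w => (FreeGroup.toWord w).length

lemma flen_le_of_support_subset {μ ν : Lam k n} (h : μ.coeff.support ⊆ ν.coeff.support) :
    flen' μ ≤ flen' ν :=
  Finset.sup_mono h

lemma le_flen_of_mem {μ : Lam k n} {w : F n} (h : w ∈ μ.coeff.support) :
    (FreeGroup.toWord w).length ≤ flen' μ :=
  Finset.le_sup (f := fun w => (FreeGroup.toWord w).length) h

lemma apply_eq_zero_of_flen_lt {μ : Lam k n} {w : F n}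
    (h : flen' μ < (FreeGroup.toWord w).length) : μ.coeff w = 0 := by
  by_contra hne
  exact absurd (le_flen_of_mem (Finsupp.mem_support_iff.2 hne)) (not_le.2 h)

@[simp] lemma flen_zero : flen' (0 : Lam k n) = 0 := by
  simp [flen']

lemma flen_add_le (μ ν : Lam k n) : flen' (μ + ν) ≤ max (flen' μ) (flen' ν) := by
  refine Finset.sup_le fun w hw => ?_
  rcases Finset.mem_union.1 (Finsupp.support_add hw) with h | h
  · exact le_max_of_le_left (le_flen_of_mem h)
  · exact le_max_of_le_right (le_flen_of_mem h)

lemma flen_neg (μ : Lam k n) : flen' (-μ) = flen' μ := by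
  unfold flen'
  rw [MonoidAlgebra.coeff_neg, Finsupp.support_neg]

lemma flen_smul_le (c : k) (μ : Lam k n) : flen' (c • μ) ≤ flen' μ :=
  flen_le_of_support_subset Finsupp.support_smul

lemma flen_of_le (w : F n) :
    flen' (MonoidAlgebra.of k (F n) w) ≤ (FreeGroup.toWord w).length := by
  refine Finset.sup_le fun u hu => ?_
  have h2 := Finsupp.support_single_subset hu
  rw [Finset.mem_singleton] at h2
  subst h2
  exact le_rfl

lemma flen_finsetSum_le {α : Type*} (s : Finset α) (f : α → Lam k n) :
    flen' (∑ a ∈ s, f a) ≤ s.sup fun a => flen' (f a) := by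
  induction s using Finset.cons_induction with
  | empty => simp
  | cons a s ha ih =>
    rw [Finset.sum_cons, Finset.sup_cons]
    exact le_trans (flen_add_le _ _) (max_le_max le_rfl ih)

/-! ### Reduced-word head decomposition -/

lemma reduce_cons_self {x : Fin n × Bool} {l : List (Fin n × Bool)}
    (h : FreeGroup.reduce (x :: l) = x :: l) : FreeGroup.reduce l = l := by
  rcases hl : FreeGroup.reduce l with _ | ⟨hd, tl⟩
  · rw [FreeGroup.reduce.cons, hl] at h
    simp at h
    exact h.symm
  · rw [FreeGroup.reduce.cons, hl] at h
    replace h : (if x.1 = hd.1 ∧ x.2 = !hd.2 then tl else x :: hd :: tl) = x :: l := h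
    by_cases hc : x.1 = hd.1 ∧ x.2 = !hd.2
    · rw [if_pos hc] at h
      exfalso
      have hsub : (FreeGroup.reduce l).length ≤ l.length :=
        (FreeGroup.Red.sublist FreeGroup.reduce.red).length_le
      rw [hl] at hsub
      rw [h] at hsub
      simp at hsub
    · rw [if_neg hc] at h
      simpa using h

lemma head_decomp {w : F n} {x : Fin n × Bool} {l : List (Fin n × Bool)}
    (h : w.toWord = x :: l) :
    (FreeGroup.mk l).toWord = l ∧ w = FreeGroup.mk [x] * FreeGroup.mk l := by
  have hred : FreeGroup.reduce (x :: l) = x :: l := by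
    rw [← h]; exact FreeGroup.reduce_toWord w
  constructor
  · rw [FreeGroup.toWord_mk]; exact reduce_cons_self hred
  · rw [FreeGroup.mul_mk]
    conv_lhs => rw [← FreeGroup.mk_toWord (x := w)]
    rw [h]
    rfl

lemma mk_single_true (j : Fin n) : FreeGroup.mk [(j, true)] = FreeGroup.of j := rfl

lemma mk_single_false (j : Fin n) : FreeGroup.mk [(j, false)] = (FreeGroup.of j)⁻¹ := by
  rw [← mk_single_true, FreeGroup.inv_mk]
  rfl

lemma dfun_letter (b : Bool) (i j : Fin n) (s : Bool) :
    dfun (k := k) b i (FreeGroup.mk [(j, s)])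
      = if j = i then
          (if s = b then 1 else -(MonoidAlgebra.of k (F n) (FreeGroup.mk [(j, s)])))
        else 0 := by
  cases s with
  | true =>
    rw [mk_single_true, dfun_of, vgen]
    by_cases hji : j = i
    · subst hji
      rw [if_pos rfl, if_pos rfl]
      cases b with
      | true => rfl
      | false => rw [if_neg (by simp)]; rfl
    · rw [if_neg hji, if_neg hji]
  | false =>
    rw [mk_single_false, dfun_inv, dfun_of, vgen]
    by_cases hji : j = i
    · subst hji
      rw [if_pos rfl, if_pos rfl]
      cases b with
      | true =>
        rw [if_neg (by simp)]
        show -(1 : Lam k n) * _ = _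
        rw [neg_one_mul]
      | false =>
        rw [if_pos rfl]
        show -(-(MonoidAlgebra.of k (F n) (FreeGroup.of j))) * _ = 1
        rw [neg_neg, ← map_mul, mul_inv_cancel, map_one]
    · rw [if_neg hji, if_neg hji, neg_zero, zero_mul]

/-- Fox derivatives do not increase length. -/
lemma flen_dfun_le (b : Bool) (i : Fin n) (w : F n) :
    flen' (dfun (k := k) b i w) ≤ (FreeGroup.toWord w).length := by
  suffices h : ∀ m : ℕ, ∀ w : F n, (FreeGroup.toWord w).length ≤ m →
      flen' (dfun (k := k) b i w) ≤ (FreeGroup.toWord w).length from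
    h (FreeGroup.toWord w).length w le_rfl
  intro m
  induction m with
  | zero =>
    intro w hw
    have h1 : w.toWord = [] := List.length_eq_zero_iff.1 (Nat.le_zero.1 hw)
    have h2 : w = 1 := FreeGroup.toWord_eq_nil_iff.1 h1
    rw [h2, dfun_one, flen_zero]
    exact Nat.zero_le _
  | succ m ih =>
    intro w hw
    rcases hl : w.toWord with _ | ⟨x, l⟩
    · have h2 : w = 1 := FreeGroup.toWord_eq_nil_iff.1 hl
      rw [h2, dfun_one, flen_zero]
      exact Nat.zero_le _
    · obtain ⟨hl2, hw2⟩ := head_decomp hl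
      have hlen : (FreeGroup.toWord (FreeGroup.mk l)).length ≤ m := by
        rw [hl2]
        have := congrArg List.length hl
        simp at this
        omega
      have hrec := ih (FreeGroup.mk l) hlen
      rw [hw2, dfun_mul]
      refine le_trans (flen_add_le _ _) (max_le ?_ ?_)
      · rcases x with ⟨j, s⟩
        rw [dfun_letter]
        by_cases hji : j = i
        · rw [if_pos hji]
          by_cases hsb : s = b
          · rw [if_pos hsb, one_mul]
            refine le_trans (flen_of_le _) ?_
            simp [hl2, hl]
          · rw [if_neg hsb, neg_mul, flen_neg, ← map_mul, ← hw2]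
            exact le_trans (flen_of_le _) (by rw [hl])
        · rw [if_neg hji, zero_mul, flen_zero]
          exact Nat.zero_le _
      · refine le_trans hrec ?_
        simp [hl2, hl]


/-! ### Head indicator and top-coefficient analysis -/

/-- indicator: `of w` if the reduced word of `w` starts with the letter `(i, !b)`. -/
def indf (b : Bool) (i : Fin n) (w : F n) : Lam k n :=
  if w.toWord.head? = some (i, !b) then MonoidAlgebra.of k (F n) w else 0

lemma flen_dfun_head (b : Bool) (i : Fin n) (w : F n) :
    flen' (dfun (k := k) b i w + indf b i w) ≤ (FreeGroup.toWord w).length - 1 := by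
  rcases hl : w.toWord with _ | ⟨⟨j, s⟩, l⟩
  · have h2 : w = 1 := FreeGroup.toWord_eq_nil_iff.1 hl
    have h3 : indf (k := k) b i w = 0 := by
      rw [indf, if_neg]
      rw [hl]
      simp
    rw [h2] at h3
    rw [h2, dfun_one, h3, add_zero, flen_zero]
    exact Nat.zero_le _
  · obtain ⟨hl2, hw2⟩ := head_decomp hl
    have hlenl : (FreeGroup.toWord w).length - 1 = l.length := by rw [hl]; simp
    by_cases hx : ((j, s) : Fin n × Bool) = (i, !b)
    · -- cancelling case: dfun w = -of w + dfun (mk l)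
      have hji : j = i := congrArg Prod.fst hx
      have hsb : s = !b := congrArg Prod.snd hx
      have hindf : indf (k := k) b i w = MonoidAlgebra.of k (F n) w := by
        rw [indf, if_pos]
        rw [hl, hx]
        rfl
      have hdfw : dfun (k := k) b i w
          = -(MonoidAlgebra.of k (F n) w) + dfun b i (FreeGroup.mk l) := by
        conv_lhs => rw [hw2]
        rw [dfun_mul, dfun_letter, if_pos hji, if_neg (by rw [hsb]; simp), neg_mul,
          ← map_mul, ← hw2]
      rw [hdfw, hindf]
      have : -(MonoidAlgebra.of k (F n) w) + dfun (k := k) b i (FreeGroup.mk l)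
          + MonoidAlgebra.of k (F n) w = dfun b i (FreeGroup.mk l) := by abel
      rw [this]
      simpa [hl2] using flen_dfun_le (k := k) b i (FreeGroup.mk l)
    · have hindf : indf (k := k) b i w = 0 := by
        rw [indf, if_neg]
        rw [hl]
        simpa using hx
      rw [hindf, add_zero]
      conv_lhs => rw [hw2]
      rw [dfun_mul, dfun_letter]
      refine le_trans (flen_add_le _ _) (max_le ?_ ?_)
      · by_cases hji : j = i
        · have hsb : s = b := by
            by_contra hsb
            exact hx (by rw [hji]; cases s <;> cases b <;> simp_all)
          rw [if_pos hji, if_pos hsb, one_mul]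
          simpa [hl2] using flen_of_le (k := k) (FreeGroup.mk l)
        · rw [if_neg hji, zero_mul, flen_zero]
          exact Nat.zero_le _
      · simpa [hl2] using flen_dfun_le (k := k) b i (FreeGroup.mk l)

/-- filtered part of `ν`: words whose reduced form starts with `(i, !b)`. -/
def FFilt (b : Bool) (i : Fin n) (ν : Lam k n) : Lam k n :=
  ν.coeff.sum fun w c => c • indf b i w

lemma FFilt_apply (b : Bool) (i : Fin n) (ν : Lam k n) (u : F n) :
    (FFilt b i ν).coeff u = if u.toWord.head? = some (i, !b) then ν.coeff u else 0 := by
  rw [FFilt, MonoidAlgebra.coeff_finsuppSum, Finsupp.sum_apply, Finsupp.sum, Finset.sum_eq_single u]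
  · rw [MonoidAlgebra.coeff_smul, Finsupp.smul_apply, indf]
    by_cases hu : u.toWord.head? = some (i, !b)
    · rw [if_pos hu, if_pos hu]
      show ν.coeff u • (Finsupp.single u (1:k)) u = ν.coeff u
      rw [Finsupp.single_eq_same, smul_eq_mul, mul_one]
    · rw [if_neg hu, if_neg hu]
      show ν.coeff u • (0 : Lam k n).coeff u = 0
      simp
  · intro w _ hwu
    rw [MonoidAlgebra.coeff_smul, Finsupp.smul_apply, indf]
    by_cases hw : w.toWord.head? = some (i, !b)
    · rw [if_pos hw]
      show ν.coeff w • (Finsupp.single w (1:k)) u = 0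
      rw [Finsupp.single_eq_of_ne' hwu]
      simp
    · rw [if_neg hw]
      show ν.coeff w • (0 : Lam k n).coeff u = 0
      simp
  · intro hu
    rw [Finsupp.notMem_support_iff.1 hu]
    simp

lemma flen_Dlin_le (b : Bool) (i : Fin n) (ν : Lam k n) :
    flen' (Dlin b i ν) ≤ flen' ν := by
  rw [Dlin_apply, Finsupp.sum]
  refine le_trans (flen_finsetSum_le _ _) (Finset.sup_le fun w hw => ?_)
  exact le_trans (le_trans (flen_smul_le _ _) (flen_dfun_le b i w)) (le_flen_of_mem hw)

lemma flen_Dlin_add_FFilt (b : Bool) (i : Fin n) (ν : Lam k n) :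
    flen' (Dlin b i ν + FFilt b i ν) ≤ flen' ν - 1 := by
  rw [Dlin_apply, FFilt, Finsupp.sum, Finsupp.sum, ← Finset.sum_add_distrib]
  refine le_trans (flen_finsetSum_le _ _) (Finset.sup_le fun w hw => ?_)
  rw [← smul_add]
  refine le_trans (flen_smul_le _ _) (le_trans (flen_dfun_head b i w) ?_)
  exact Nat.sub_le_sub_right (le_flen_of_mem hw) 1

lemma Dlin_top_coeff (b : Bool) (i : Fin n) (ν : Lam k n) (u : F n)
    (h1 : flen' ν ≤ (FreeGroup.toWord u).length) (h2 : 1 ≤ (FreeGroup.toWord u).length) :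
    (Dlin b i ν).coeff u = -(if u.toWord.head? = some (i, !b) then ν.coeff u else 0) := by
  have h3 := flen_Dlin_add_FFilt b i ν
  have h4 : (Dlin b i ν + FFilt b i ν).coeff u = 0 :=
    apply_eq_zero_of_flen_lt (lt_of_le_of_lt h3 (by omega))
  rw [MonoidAlgebra.coeff_add, Finsupp.add_apply] at h4
  rw [← FFilt_apply]
  exact eq_neg_of_add_eq_zero_left h4


/-! ### The star operators and the descent argument -/

/-- The star operator `S_{b,i}`. -/
def Sop (b : Bool) (i : Fin n) (γ μ : Lam k n) : Lam k n :=
  Dlin b i (μ - freeGroupAug k n μ • γ)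

/-- top set: support elements of maximal length `m`. -/
def Tset (m : ℕ) (μ : Lam k n) : Finset (F n) :=
  μ.coeff.support.filter fun w => (FreeGroup.toWord w).length = m

lemma mem_Tset {m : ℕ} {μ : Lam k n} {u : F n} :
    u ∈ Tset m μ ↔ μ.coeff u ≠ 0 ∧ (FreeGroup.toWord u).length = m := by
  rw [Tset, Finset.mem_filter, Finsupp.mem_support_iff]

lemma Tset_nonempty {μ : Lam k n} (hμ : μ ≠ 0) : (Tset (flen' μ) μ).Nonempty := by
  obtain ⟨w, hw, hsup⟩ := Finset.exists_mem_eq_sup μ.coeff.support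
    (Finsupp.support_nonempty_iff.2 (mt MonoidAlgebra.coeff_eq_zero.1 hμ)) (fun w => (FreeGroup.toWord w).length)
  exact ⟨w, mem_Tset.2 ⟨Finsupp.mem_support_iff.1 hw, hsup.symm⟩⟩

lemma flen_sub_smul_le (lam γ : Lam k n) (c : k) :
    flen' (lam - c • γ) ≤ max (flen' lam) (flen' γ) := by
  rw [sub_eq_add_neg]
  refine le_trans (flen_add_le _ _) (max_le_max le_rfl ?_)
  rw [flen_neg]
  exact flen_smul_le c γ

section Gamma

variable (γ : Lam k n) (hγ : freeGroupAug k n γ = 1)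

lemma smul_mem_span (c : k) : c • γ ∈ Submodule.span (Lam k n) {γ} :=
  Submodule.smul_of_tower_mem _ c (Submodule.mem_span_singleton_self γ)

lemma nu_not_mem {lam : Lam k n} (hmem : lam ∉ Submodule.span (Lam k n) {γ}) :
    lam - freeGroupAug k n lam • γ ∉ Submodule.span (Lam k n) {γ} := by
  intro h
  refine hmem ?_
  have h2 := Submodule.add_mem _ h (smul_mem_span γ (freeGroupAug k n lam))
  rwa [sub_add_cancel] at h2

include hγ in
lemma nu_aug_zero (lam : Lam k n) :
    freeGroupAug k n (lam - freeGroupAug k n lam • γ) = 0 := by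
  rw [map_sub, map_smul, hγ, smul_eq_mul, mul_one, sub_self]

lemma exists_witness (b : Bool) {ν : Lam k n} (hν : ν ∉ Submodule.span (Lam k n) {γ})
    (haug : freeGroupAug k n ν = 0) : ∃ i, Dlin b i ν ∉ Submodule.span (Lam k n) {γ} := by
  by_contra h
  push_neg at h
  refine hν ?_
  have hrec := recon_lam b ν
  rw [haug, zero_smul, zero_add] at hrec
  rw [hrec]
  refine Submodule.sum_mem _ fun i _ => ?_
  have := Submodule.smul_mem (Submodule.span (Lam k n) {γ})
    ((MonoidAlgebra.of k (F n) (gel b i) - 1)) (h i)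
  rwa [smul_eq_mul] at this

include hγ in
lemma step {lam : Lam k n} (hmem : lam ∉ Submodule.span (Lam k n) {γ})
    (hlen : flen' γ < flen' lam) :
    ∃ b i, Sop b i γ lam ∉ Submodule.span (Lam k n) {γ} ∧
      (flen' (Sop b i γ lam) < flen' lam ∨
        (flen' (Sop b i γ lam) = flen' lam ∧
          (Tset (flen' lam) (Sop b i γ lam)).card < (Tset (flen' lam) lam).card)) := by
  set m := flen' lam with hm
  set ν := lam - freeGroupAug k n lam • γ with hνdef
  have hlam0 : lam ≠ 0 := fun h => hmem (h ▸ Submodule.zero_mem _)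
  have hν_mem : ν ∉ Submodule.span (Lam k n) {γ} := nu_not_mem γ hmem
  have hν_aug : freeGroupAug k n ν = 0 := nu_aug_zero γ hγ lam
  have hν_flen : flen' ν ≤ m := by
    refine le_trans (flen_sub_smul_le lam γ _) ?_
    exact max_le le_rfl (le_of_lt hlen)
  have hm1 : 1 ≤ m := by omega
  have hcoef : ∀ u : F n, (FreeGroup.toWord u).length = m → ν.coeff u = lam.coeff u := by
    intro u hu
    rw [hνdef, MonoidAlgebra.coeff_sub, MonoidAlgebra.coeff_smul, Finsupp.sub_apply, Finsupp.smul_apply,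
      apply_eq_zero_of_flen_lt (μ := γ) (by omega), smul_zero, sub_zero]
  have hSop : ∀ b i, Sop b i γ lam = Dlin b i ν := fun b i => rfl
  have htop : ∀ (b : Bool) (i : Fin n) (u : F n), (FreeGroup.toWord u).length = m →
      (Sop b i γ lam).coeff u = -(if u.toWord.head? = some (i, !b) then lam.coeff u else 0) := by
    intro b i u hu
    rw [hSop, Dlin_top_coeff b i ν u (by omega) (by omega)]
    by_cases hh : u.toWord.head? = some (i, !b)
    · rw [if_pos hh, if_pos hh, hcoef u hu]
    · rw [if_neg hh, if_neg hh]
  have hTset : ∀ (b : Bool) (i : Fin n),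
      Tset m (Sop b i γ lam)
        = (Tset m lam).filter fun u => u.toWord.head? = some (i, !b) := by
    intro b i
    ext u
    rw [mem_Tset, Finset.mem_filter, mem_Tset]
    constructor
    · rintro ⟨h1, h2⟩
      rw [htop b i u h2] at h1
      by_cases hh : u.toWord.head? = some (i, !b)
      · rw [if_pos hh] at h1
        exact ⟨⟨fun h0 => h1 (by rw [h0, neg_zero]), h2⟩, hh⟩
      · rw [if_neg hh, neg_zero] at h1
        exact absurd rfl h1
    · rintro ⟨⟨h1, h2⟩, hh⟩
      refine ⟨?_, h2⟩
      rw [htop b i u h2, if_pos hh]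
      simpa using h1
  have hflen_le : ∀ (b : Bool) (i : Fin n), flen' (Sop b i γ lam) ≤ m := by
    intro b i
    rw [hSop]
    exact le_trans (flen_Dlin_le b i ν) hν_flen
  have hcard_le : ∀ (b : Bool) (i : Fin n),
      (Tset m (Sop b i γ lam)).card ≤ (Tset m lam).card := by
    intro b i
    rw [hTset]
    exact Finset.card_le_card (Finset.filter_subset _ _)
  obtain ⟨i₁, hw1⟩ := exists_witness γ true hν_mem hν_aug
  obtain ⟨i₀, hw0⟩ := exists_witness γ false hν_mem hν_aug
  rw [← hSop] at hw1 hw0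
  by_cases hcase : flen' (Sop true i₁ γ lam) < m ∨
      (Tset m (Sop true i₁ γ lam)).card < (Tset m lam).card
  · refine ⟨true, i₁, hw1, ?_⟩
    rcases hcase with h | h
    · exact Or.inl h
    · by_cases hf : flen' (Sop true i₁ γ lam) < m
      · exact Or.inl hf
      · exact Or.inr ⟨le_antisymm (hflen_le true i₁) (not_lt.1 hf), h⟩
  · push_neg at hcase
    obtain ⟨hc1, hc2⟩ := hcase
    have hfull : (Tset m lam).filter (fun u => u.toWord.head? = some (i₁, !true))
        = Tset m lam := by
      refine Finset.eq_of_subset_of_card_le (Finset.filter_subset _ _) ?_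
      rw [← hTset]
      exact hc2
    refine ⟨false, i₀, hw0, ?_⟩
    by_cases hf : flen' (Sop false i₀ γ lam) < m
    · exact Or.inl hf
    · refine Or.inr ⟨le_antisymm (hflen_le false i₀) (not_lt.1 hf), ?_⟩
      rw [hTset]
      refine lt_of_le_of_ne (Finset.card_le_card (Finset.filter_subset _ _)) ?_
      intro heq
      have hfull0 : (Tset m lam).filter (fun u => u.toWord.head? = some (i₀, !false))
          = Tset m lam :=
        Finset.eq_of_subset_of_card_le (Finset.filter_subset _ _) (le_of_eq heq.symm)
      obtain ⟨u, hu⟩ : (Tset m lam).Nonempty := hm ▸ Tset_nonempty hlam0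
      have h1' : u ∈ (Tset m lam).filter (fun u => u.toWord.head? = some (i₁, !true)) := by
        rw [hfull]; exact hu
      have h0' : u ∈ (Tset m lam).filter (fun u => u.toWord.head? = some (i₀, !false)) := by
        rw [hfull0]; exact hu
      have h1 : u.toWord.head? = some (i₁, !true) := (Finset.mem_filter.1 h1').2
      have h0 : u.toWord.head? = some (i₀, !false) := (Finset.mem_filter.1 h0').2
      rw [h1] at h0
      simp at h0

include hγ in
lemma finish {lam : Lam k n} (hmem : lam ∉ Submodule.span (Lam k n) {γ})
    (hlen : flen' lam ≤ flen' γ) :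
    ∃ b i, Sop b i γ lam ∉ Submodule.span (Lam k n) {γ} ∧
      flen' (Sop b i γ lam) ≤ flen' γ := by
  obtain ⟨i₁, hw1⟩ := exists_witness γ true (nu_not_mem γ hmem) (nu_aug_zero γ hγ lam)
  refine ⟨true, i₁, hw1, ?_⟩
  refine le_trans (flen_Dlin_le true i₁ _) ?_
  exact le_trans (flen_sub_smul_le lam γ _) (max_le hlen le_rfl)

include hγ in
lemma main : ∀ a bnd : ℕ, ∀ lam : Lam k n, lam ∉ Submodule.span (Lam k n) {γ} →
    flen' lam ≤ a → (Tset (flen' lam) lam).card ≤ bnd →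
    ∃ L : List (Bool × Fin n), L ≠ [] ∧
      (L.foldl (fun x p => Sop p.1 p.2 γ x) lam ∉ Submodule.span (Lam k n) {γ}) ∧
      flen' (L.foldl (fun x p => Sop p.1 p.2 γ x) lam) ≤ flen' γ := by
  intro a
  induction a using Nat.strong_induction_on with
  | _ a iha =>
    intro bnd
    induction bnd using Nat.strong_induction_on with
    | _ bnd ihb =>
      intro lam hmem hla hcard
      by_cases hsmall : flen' lam ≤ flen' γ
      · obtain ⟨b, i, h1, h2⟩ := finish γ hγ hmem hsmall
        exact ⟨[(b, i)], by simp, h1, h2⟩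
      · push_neg at hsmall
        obtain ⟨b0, i0, hmem', hdec⟩ := step γ hγ hmem hsmall
        rcases hdec with h | ⟨heq, hlt⟩
        · obtain ⟨L, hL1, hL2, hL3⟩ := iha (flen' (Sop b0 i0 γ lam))
            (lt_of_lt_of_le h hla) (Tset (flen' (Sop b0 i0 γ lam)) (Sop b0 i0 γ lam)).card
            (Sop b0 i0 γ lam) hmem' le_rfl le_rfl
          exact ⟨(b0, i0) :: L, by simp, by rwa [List.foldl_cons], by rwa [List.foldl_cons]⟩
        · obtain ⟨L, hL1, hL2, hL3⟩ := ihb (Tset (flen' lam) (Sop b0 i0 γ lam)).card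
            (lt_of_lt_of_le hlt hcard) (Sop b0 i0 γ lam) hmem'
            (by rw [heq]; exact hla) (by rw [heq])
          exact ⟨(b0, i0) :: L, by simp, by rwa [List.foldl_cons], by rwa [List.foldl_cons]⟩

end Gamma


end Stmt16Aux
end

/-- For a comonic free polynomial `γ` and any `λ ∉ Λγ`, some nonempty composition of the
star-action operators `S i : λ ↦ D i (λ - ε(λ)γ)` and `S̄ i : λ ↦ D̄ i (λ - ε(λ)γ)` sends
`λ` outside `Λγ` to an element of length at most `ℓ(γ)`. -/
theorem stmt16 (k : Type*) [Field k] (n : ℕ) (hn : 2 ≤ n)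
    (D Db : Fin n → MonoidAlgebra k (FreeGroup (Fin n)) → MonoidAlgebra k (FreeGroup (Fin n)))
    (hD : ∀ γ : MonoidAlgebra k (FreeGroup (Fin n)),
      γ = freeGroupAug k n γ • (1 : MonoidAlgebra k (FreeGroup (Fin n)))
        + ∑ i : Fin n,
            ((MonoidAlgebra.of k (FreeGroup (Fin n)) (FreeGroup.of i)
              : MonoidAlgebra k (FreeGroup (Fin n))) - 1) * D i γ)
    (hDb : ∀ γ : MonoidAlgebra k (FreeGroup (Fin n)),
      γ = freeGroupAug k n γ • (1 : MonoidAlgebra k (FreeGroup (Fin n)))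
        + ∑ i : Fin n,
            ((MonoidAlgebra.of k (FreeGroup (Fin n)) (FreeGroup.of i)⁻¹
              : MonoidAlgebra k (FreeGroup (Fin n))) - 1) * Db i γ)
    (γ : MonoidAlgebra k (FreeGroup (Fin n))) (hγ : freeGroupAug k n γ = 1)
    (lam : MonoidAlgebra k (FreeGroup (Fin n)))
    (hlam : lam ∉ Submodule.span (MonoidAlgebra k (FreeGroup (Fin n))) {γ}) :
    ∃ L : List (MonoidAlgebra k (FreeGroup (Fin n)) → MonoidAlgebra k (FreeGroup (Fin n))),
      L ≠ [] ∧
      (∀ g ∈ L,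
        (∃ i, g = fun μ => D i (μ - freeGroupAug k n μ • γ)) ∨
        (∃ i, g = fun μ => Db i (μ - freeGroupAug k n μ • γ))) ∧
      L.foldl (fun x g => g x) lam ∉
        Submodule.span (MonoidAlgebra k (FreeGroup (Fin n))) {γ} ∧
      flen (L.foldl (fun x g => g x) lam) ≤ flen γ := by
  classical
  open Stmt16Aux in
  -- the given derivations agree with the canonical ones
  have hDlin_one : ∀ (b : Bool) (i : Fin n), Dlin (k := k) b i (1 : Lam k n) = 0 := by
    intro b i
    rw [show (1 : Lam k n) = MonoidAlgebra.of k (F n) 1 from (map_one _).symm, Dlin_of, dfun_one]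
  have hDeq : ∀ (i : Fin n) (μ : Lam k n), D i μ = Dlin true i μ := by
    intro i μ
    have h2 := congrArg (Dlin (k := k) true i) (hD μ)
    rw [map_add, map_smul, hDlin_one, smul_zero, zero_add, map_sum] at h2
    have h3 : ∀ j : Fin n, Dlin (k := k) true i
        ((MonoidAlgebra.of k (FreeGroup (Fin n)) (FreeGroup.of j) - 1) * D j μ)
        = if j = i then D j μ else 0 := by
      intro j
      have := Dlin_gel_mul (k := k) true i j (D j μ)
      rwa [gel_true] at this
    rw [Finset.sum_congr rfl fun j _ => h3 j] at h2
    rw [Finset.sum_ite_eq' Finset.univ i (fun j => D j μ), if_pos (Finset.mem_univ i)] at h2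
    exact h2.symm
  have hDbeq : ∀ (i : Fin n) (μ : Lam k n), Db i μ = Dlin false i μ := by
    intro i μ
    have h2 := congrArg (Dlin (k := k) false i) (hDb μ)
    rw [map_add, map_smul, hDlin_one, smul_zero, zero_add, map_sum] at h2
    have h3 : ∀ j : Fin n, Dlin (k := k) false i
        ((MonoidAlgebra.of k (FreeGroup (Fin n)) (FreeGroup.of j)⁻¹ - 1) * Db j μ)
        = if j = i then Db j μ else 0 := by
      intro j
      have := Dlin_gel_mul (k := k) false i j (Db j μ)
      rwa [gel_false] at this
    rw [Finset.sum_congr rfl fun j _ => h3 j] at h2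
    rw [Finset.sum_ite_eq' Finset.univ i (fun j => Db j μ), if_pos (Finset.mem_univ i)] at h2
    exact h2.symm
  -- run the descent
  obtain ⟨Lp, hL1, hL2, hL3⟩ := main γ hγ (flen' lam)
    (Tset (flen' lam) lam).card lam hlam le_rfl le_rfl
  -- translate pairs to actual operator functions
  set f : Bool × Fin n → (MonoidAlgebra k (FreeGroup (Fin n)) → MonoidAlgebra k (FreeGroup (Fin n)))
    := fun p => if p.1 then (fun μ => D p.2 (μ - freeGroupAug k n μ • γ))
        else (fun μ => Db p.2 (μ - freeGroupAug k n μ • γ)) with hf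
  have hfS : ∀ (x : Lam k n) (p : Bool × Fin n), f p x = Sop p.1 p.2 γ x := by
    intro x p
    rcases p with ⟨b, i⟩
    cases b with
    | true => simp only [hf, if_pos rfl]; rw [hDeq]; rfl
    | false => simp only [hf, Bool.false_eq_true, if_false]; rw [hDbeq]; rfl
  have hfold : (Lp.map f).foldl (fun x g => g x) lam
      = Lp.foldl (fun x p => Sop p.1 p.2 γ x) lam := by
    rw [List.foldl_map]
    congr 1
    funext x p
    exact hfS x p
  refine ⟨Lp.map f, ?_, ?_, ?_, ?_⟩
  · simpa using hL1
  · intro g hg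
    obtain ⟨p, _, hp⟩ := List.mem_map.1 hg
    rcases p with ⟨b, i⟩
    cases b with
    | true =>
      left
      exact ⟨i, by rw [← hp]; simp [hf]⟩
    | false =>
      right
      exact ⟨i, by rw [← hp]; simp [hf]⟩
  · rw [hfold]
    exact hL2
  · rw [hfold]
    exact hL3
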